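/- Let N ≥ 2 be an integer, s ∈ (0,1), and let Ω ⊂ ℝ^N be a bounded open set. Let w be continuous on the closure of Ω, suppose that for every x ∈ Ω the principal-value limit defining (−Δ)^s_Ω w(x) exists with (−Δ)^s_Ω w(x) ≥ 0, and that w ≥ 0 on ∂Ω. Then w ≥ 0 on the closure of Ω. -/

import Mathlib

open MeasureTheory Metric Set Filter

/-- The regional fractional Laplacian `(-Δ)^s_Ω u (x) = L` as a principal-value limit
(normalizing constant taken equal to 1). -/
def regLap (N : ℕ) (s : ℝ) (Ω : Set (EuclideanSpace ℝ (Fin N)))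
    (u : EuclideanSpace ℝ (Fin N) → ℝ) (x : EuclideanSpace ℝ (Fin N)) (L : ℝ) : Prop :=
  Filter.Tendsto
    (fun ε : ℝ => ∫ z in Ω \ Metric.ball x ε, (u x - u z) / ‖x - z‖ ^ ((N : ℝ) + 2 * s))
    (nhdsWithin 0 (Set.Ioi 0)) (nhds L)

set_option maxHeartbeats 1000000 in
/-- comparison/maximum principle: if `(-Δ)^s_Ω w ≥ 0` in `Ω` and `w ≥ 0`
on `∂Ω`, then `w ≥ 0` on the closure of `Ω`. -/
theorem stmt4 (N : ℕ) (hN : 2 ≤ N) (s : ℝ) (hs : s ∈ Set.Ioo (0 : ℝ) 1)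
    (Ω : Set (EuclideanSpace ℝ (Fin N))) (hΩo : IsOpen Ω) (hΩb : Bornology.IsBounded Ω)
    (w : EuclideanSpace ℝ (Fin N) → ℝ) (hw : ContinuousOn w (closure Ω))
    (hlap : ∀ x ∈ Ω, ∃ L : ℝ, regLap N s Ω w x L ∧ 0 ≤ L)
    (hbd : ∀ x ∈ frontier Ω, 0 ≤ w x) :
    ∀ x ∈ closure Ω, 0 ≤ w x := by
  intro x hx
  by_contra hneg
  push_neg at hneg
  -- minimum of `w` on the compact set `closure Ω`
  have hK : IsCompact (closure Ω) := hΩb.isCompact_closure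
  obtain ⟨x₀, hx₀, hmin'⟩ := hK.exists_isMinOn ⟨x, hx⟩ hw
  have hmin : ∀ z ∈ closure Ω, w x₀ ≤ w z := fun z hz => hmin' hz
  set m : ℝ := w x₀ with hm_def
  have hm : m < 0 := lt_of_le_of_lt (hmin x hx) hneg
  -- the minimum point lies in `Ω`
  have hx₀Ω : x₀ ∈ Ω := by
    by_contra h
    have hfr : x₀ ∈ frontier Ω := by
      rw [hΩo.frontier_eq]; exact ⟨hx₀, h⟩
    exact absurd (hbd x₀ hfr) (not_le.2 hm)
  -- the frontier is nonempty
  haveI : Nonempty (Fin N) := ⟨⟨0, by omega⟩⟩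
  have hne : (frontier Ω).Nonempty := by
    rw [nonempty_frontier_iff]
    refine ⟨⟨x₀, hx₀Ω⟩, fun h => ?_⟩
    exact NormedSpace.unbounded_univ ℝ (EuclideanSpace ℝ (Fin N)) (h ▸ hΩb)
  obtain ⟨y, hy⟩ := hne
  have hy_cl : y ∈ closure Ω := frontier_subset_closure hy
  have hwy : 0 ≤ w y := hbd y hy
  -- near `y`, `w > m/2`
  have hev : ∀ᶠ z in nhdsWithin y (closure Ω), m / 2 < w z :=
    hw y hy_cl (Ioi_mem_nhds (by linarith))
  rw [eventually_nhdsWithin_iff] at hev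
  obtain ⟨r, hr, hrball⟩ := Metric.eventually_nhds_iff_ball.mp hev
  have hx₀y : x₀ ∉ ball y r := by
    intro h
    have := hrball x₀ h hx₀
    linarith
  -- pick a point of `Ω` near `y`
  obtain ⟨q, hqΩ, hqy⟩ := Metric.mem_closure_iff.mp hy_cl r hr
  have hqball : q ∈ ball y r := by rw [mem_ball']; exact hqy
  have hd : 0 < dist x₀ q := by
    have h1 : r ≤ dist x₀ y := not_lt.mp (mt mem_ball.mpr hx₀y)
    have h2 := dist_triangle x₀ q y
    have : dist q y < r := by rwa [dist_comm] at hqy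
    linarith
  set d : ℝ := dist x₀ q with hd_def
  -- small ball around `q` inside `Ω ∩ ball y r`, far from `x₀`
  have hopen : IsOpen (Ω ∩ ball y r) := hΩo.inter isOpen_ball
  obtain ⟨ρ₀, hρ₀, hρ₀sub⟩ := Metric.isOpen_iff.mp hopen q ⟨hqΩ, hqball⟩
  set ρ : ℝ := min (ρ₀ / 2) (d / 2) with hρ_def
  have hρ : 0 < ρ := lt_min (by linarith) (by linarith)
  have hρd : ρ ≤ d / 2 := min_le_right _ _
  set B : Set (EuclideanSpace ℝ (Fin N)) := ball q ρ with hB_def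
  have hBsub : B ⊆ Ω ∩ ball y r := fun z hz =>
    hρ₀sub (mem_ball.mpr (lt_of_lt_of_le (mem_ball.mp hz) (le_trans (min_le_left _ _) (by linarith))))
  have hBfar : ∀ z ∈ B, ρ ≤ dist x₀ z := by
    intro z hz
    have h1 : dist q z < ρ := by rw [dist_comm]; exact mem_ball.mp hz
    have h2 := dist_triangle x₀ z q
    have h3 : dist z q < ρ := mem_ball.mp hz
    linarith [hρd]
  have hBcl : ∀ z ∈ B, z ∈ closure Ω := fun z hz => subset_closure (hBsub hz).1
  have hBw : ∀ z ∈ B, m / 2 < w z := fun z hz => hrball z (hBsub hz).2 (hBcl z hz)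
  -- bound on diameter
  obtain ⟨C, hC⟩ := isBounded_iff_forall_norm_le.mp hΩb.closure
  have hC0 : 0 ≤ C := le_trans (norm_nonneg x₀) (hC x₀ hx₀)
  set D : ℝ := 2 * C + 1 with hD_def
  have hD : 0 < D := by linarith
  have hDbd : ∀ z ∈ closure Ω, ‖x₀ - z‖ ≤ D := by
    intro z hz
    calc ‖x₀ - z‖ ≤ ‖x₀‖ + ‖z‖ := norm_sub_le _ _
    _ ≤ C + C := add_le_add (hC x₀ hx₀) (hC z hz)
    _ ≤ D := by linarith
  -- the exponent
  set p : ℝ := (N : ℝ) + 2 * s with hp_def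
  have hp : 0 < p := by
    have : (2 : ℝ) ≤ (N : ℝ) := by exact_mod_cast hN
    have := hs.1
    positivity
  have hDp : 0 < D ^ p := Real.rpow_pos_of_pos hD p
  -- bound on |w| on closure Ω
  obtain ⟨M, hM⟩ := hK.exists_bound_of_continuousOn hw
  have hM0 : 0 ≤ M := le_trans (norm_nonneg _) (hM x₀ hx₀)
  -- the kernel is continuous
  have hker : Continuous fun z : EuclideanSpace ℝ (Fin N) => ‖x₀ - z‖ ^ p :=
    (Continuous.norm (continuous_const.sub continuous_id)).rpow_const fun z => Or.inr hp.le
  -- the target negative constant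
  set c₀ : ℝ := (volume B).toReal * (m / 2 / D ^ p) with hc₀_def
  have hvolB : 0 < (volume B).toReal :=
    ENNReal.toReal_pos (measure_ball_pos volume q hρ).ne' measure_ball_lt_top.ne
  have hc₀ : c₀ < 0 := mul_neg_of_pos_of_neg hvolB (div_neg_of_neg_of_pos (by linarith) hDp)
  -- the principal value at x₀
  obtain ⟨L, hL, hL0⟩ := hlap x₀ hx₀Ω
  -- key estimate for each small ε
  have key : ∀ ε ∈ Ioc (0 : ℝ) ρ,
      (∫ z in Ω \ ball x₀ ε, (w x₀ - w z) / ‖x₀ - z‖ ^ p) ≤ c₀ := by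
    rintro ε ⟨hε, hερ⟩
    set S : Set (EuclideanSpace ℝ (Fin N)) := Ω \ ball x₀ ε with hS_def
    have hSm : MeasurableSet S := hΩo.measurableSet.diff measurableSet_ball
    have hScl : S ⊆ closure Ω := fun z hz => subset_closure hz.1
    -- measurability of the integrand on S
    have hwae : AEStronglyMeasurable w (volume.restrict S) :=
      (hw.aestronglyMeasurable measurableSet_closure).mono_measure
        (Measure.restrict_mono hScl le_rfl)
    have hfae : AEStronglyMeasurable (fun z => (w x₀ - w z) / ‖x₀ - z‖ ^ p)
        (volume.restrict S) :=
      ((aestronglyMeasurable_const.sub hwae).aemeasurable.div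
        hker.aestronglyMeasurable.restrict.aemeasurable).aestronglyMeasurable
    -- integrability on S
    have hSfin : volume S ≠ ⊤ :=
      ((measure_mono (diff_subset.trans subset_closure)).trans_lt hΩb.closure.measure_lt_top).ne
    have hεp : 0 < ε ^ p := Real.rpow_pos_of_pos hε p
    have hbound : ∀ z ∈ S, ‖(w x₀ - w z) / ‖x₀ - z‖ ^ p‖ ≤ 2 * M / ε ^ p := by
      intro z hz
      have hz1 : ε ≤ dist x₀ z := by
        have := hz.2; rwa [mem_ball, dist_comm, not_lt] at this
      have hz2 : ε ^ p ≤ ‖x₀ - z‖ ^ p := by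
        rw [← dist_eq_norm]
        exact Real.rpow_le_rpow hε.le hz1 hp.le
      have hnum : ‖w x₀ - w z‖ ≤ 2 * M := by
        calc ‖w x₀ - w z‖ ≤ ‖w x₀‖ + ‖w z‖ := norm_sub_le _ _
        _ ≤ M + M := add_le_add (hM x₀ hx₀) (hM z (hScl hz))
        _ = 2 * M := by ring
      rw [norm_div]
      have hden : ‖‖x₀ - z‖ ^ p‖ = ‖x₀ - z‖ ^ p :=
        Real.norm_of_nonneg (Real.rpow_nonneg (norm_nonneg _) p)
      rw [hden]
      exact div_le_div₀ (by linarith) hnum hεp hz2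
    have hint : IntegrableOn (fun z => (w x₀ - w z) / ‖x₀ - z‖ ^ p) S volume :=
      ⟨hfae, HasFiniteIntegral.restrict_of_bounded (C := 2 * M / ε ^ p) hSfin.lt_top
        ((ae_restrict_mem hSm).mono fun z hz => hbound z hz)⟩
    -- B ⊆ S
    have hBS : B ⊆ S := by
      intro z hz
      refine ⟨(hBsub hz).1, ?_⟩
      rw [mem_ball, dist_comm, not_lt]
      exact le_trans hερ (hBfar z hz)
    -- split the integral
    have hsplit := integral_diff measurableSet_ball hint hBS
    -- the integral over S \ B is nonpositive
    have h1 : (∫ z in S \ B, (w x₀ - w z) / ‖x₀ - z‖ ^ p) ≤ 0 := by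
      apply setIntegral_nonpos (hSm.diff measurableSet_ball)
      intro z hz
      apply div_nonpos_of_nonpos_of_nonneg
      · have := hmin z (hScl hz.1); linarith
      · exact Real.rpow_nonneg (norm_nonneg _) p
    -- the integral over B is ≤ c₀
    have h2 : (∫ z in B, (w x₀ - w z) / ‖x₀ - z‖ ^ p) ≤ c₀ := by
      have hintB : IntegrableOn (fun z => (w x₀ - w z) / ‖x₀ - z‖ ^ p) B volume :=
        hint.mono_set hBS
      have hconst : IntegrableOn (fun _ => m / 2 / D ^ p) B volume :=
        (integrableOn_const_iff).mpr (Or.inr measure_ball_lt_top)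
      have hle : ∀ z ∈ B, (w x₀ - w z) / ‖x₀ - z‖ ^ p ≤ m / 2 / D ^ p := by
        intro z hz
        have hq : 0 < ‖x₀ - z‖ ^ p := by
          apply Real.rpow_pos_of_pos _ p
          rw [← dist_eq_norm]
          exact lt_of_lt_of_le hρ (hBfar z hz)
        have hqD : ‖x₀ - z‖ ^ p ≤ D ^ p :=
          Real.rpow_le_rpow (norm_nonneg _) (hDbd z (hBcl z hz)) hp.le
        have hwz : m / 2 < w z := hBw z hz
        rw [div_le_div_iff₀ hq hDp]
        nlinarith
      calc (∫ z in B, (w x₀ - w z) / ‖x₀ - z‖ ^ p)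
          ≤ ∫ _ in B, m / 2 / D ^ p := setIntegral_mono_on hintB hconst measurableSet_ball hle
        _ = (volume B).toReal * (m / 2 / D ^ p) := by rw [setIntegral_const, smul_eq_mul]; rfl
        _ = c₀ := rfl
    have : (∫ z in S, (w x₀ - w z) / ‖x₀ - z‖ ^ p)
        = (∫ z in S \ B, (w x₀ - w z) / ‖x₀ - z‖ ^ p)
          + (∫ z in B, (w x₀ - w z) / ‖x₀ - z‖ ^ p) := by linarith [hsplit]
    rw [this]
    linarith
  -- pass to the limit
  have hmem : Ioc (0 : ℝ) ρ ∈ nhdsWithin (0 : ℝ) (Ioi 0) := Ioc_mem_nhdsGT hρ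
  have hLle : L ≤ c₀ :=
    le_of_tendsto hL (Filter.eventually_of_mem hmem fun ε hε => key ε hε)
  linarith
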